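/- Every ℤ-homological Z_1-set in a topological space X is a Z_1-set in X. More generally, if A is a G-homological Z_1-set for some nontrivial abelian group G, then A is a Z_1-set. -/

import Mathlib

open SimplexCategory

noncomputable section

open scoped NNReal in
/-- The topological simplex associated to `x : SimplexCategory`
(the definition removed from Mathlib, restored with its old meaning). -/
def SimplexCategory.toTopObj (x : SimplexCategory) : Set (Fin (x.len + 1) → ℝ≥0) :=
  { f | ∑ i, f i = 1 }

open scoped NNReal in
/-- A morphism in `SimplexCategory` induces a map on the associated topological spaces
(the definition removed from Mathlib, restored with its old meaning). -/
def SimplexCategory.toTopMap {x y : SimplexCategory} (f : x ⟶ y) (g : x.toTopObj) :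
    y.toTopObj :=
  ⟨fun i => ∑ j ∈ Finset.univ.filter (fun k => f.toOrderHom k = i), g.1 j, by
    simp only [SimplexCategory.toTopObj, Set.mem_setOf_eq]
    rw [Finset.sum_fiberwise (s := Finset.univ) (g := fun k => f.toOrderHom k) (f := g.1)]
    exact g.2⟩

theorem SimplexCategory.continuous_toTopMap {x y : SimplexCategory} (f : x ⟶ y) :
    Continuous (SimplexCategory.toTopMap f) := by
  refine Continuous.subtype_mk (continuous_pi fun i => ?_) _
  exact continuous_finset_sum _ (fun j _ => (continuous_apply j).comp continuous_subtype_val)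

/-- The topological `n`-simplex. -/
abbrev TopSimplex (n : ℕ) : Type := (SimplexCategory.mk n).toTopObj

/-- The `i`-th face inclusion of topological simplices, as a continuous map. -/
def faceMap {n : ℕ} (i : Fin (n + 2)) : C(TopSimplex n, TopSimplex (n + 1)) :=
  ⟨SimplexCategory.toTopMap (SimplexCategory.δ i), SimplexCategory.continuous_toTopMap _⟩

/-- The group of singular `n`-chains of `X` with coefficients in `G`. -/
abbrev SChain (G : Type) [AddCommGroup G] (X : Type) [TopologicalSpace X] (n : ℕ) : Type :=
  C(TopSimplex n, X) →₀ G

/-- The singular boundary operator. -/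
def sBoundary {G : Type} [AddCommGroup G] {X : Type} [TopologicalSpace X] {n : ℕ}
    (c : SChain G X (n + 1)) : SChain G X n :=
  c.sum fun σ g => ∑ i : Fin (n + 2), ((-1 : ℤ) ^ (i : ℕ)) • Finsupp.single (σ.comp (faceMap i)) g

/-- The chain map induced by a continuous map. -/
def chainMap {G : Type} [AddCommGroup G] {X Y : Type} [TopologicalSpace X] [TopologicalSpace Y]
    (φ : C(X, Y)) {n : ℕ} (c : SChain G X n) : SChain G Y n :=
  Finsupp.mapDomain (fun σ => φ.comp σ) c

/-- The continuous inclusion of one subspace into a larger one. -/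
def inclCM {X : Type} [TopologicalSpace X] {B U : Set X} (h : B ⊆ U) : C(B, U) :=
  ⟨Set.inclusion h, continuous_inclusion h⟩

/-- `ZeroRelHomology G U B h k` says that the relative singular homology group
`H_k(U, B; G)` of the pair of subspaces `B ⊆ U` is trivial: every relative
`k`-cycle is a relative `k`-boundary. -/
def ZeroRelHomology (G : Type) [AddCommGroup G] {X : Type} [TopologicalSpace X]
    (U B : Set X) (h : B ⊆ U) : ℕ → Prop
  | 0 => ∀ c : SChain G U 0, ∃ (c' : SChain G U 1) (d : SChain G B 0),
      c = sBoundary c' + chainMap (inclCM h) d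
  | (k + 1) => ∀ c : SChain G U (k + 1),
      (∃ e : SChain G B k, sBoundary c = chainMap (inclCM h) e) →
      ∃ (c' : SChain G U (k + 2)) (d : SChain G B (k + 1)),
        c = sBoundary c' + chainMap (inclCM h) d

/-- `A` is a `G`-homological `Z_n`-set in `X`. -/
def IsGHomologicalZSet (G : Type) [AddCommGroup G] {X : Type} [TopologicalSpace X]
    (A : Set X) (n : ℕ) : Prop :=
  IsClosed A ∧ ∀ U : Set X, IsOpen U → ∀ k ≤ n,
    ZeroRelHomology G U (U \ A) Set.diff_subset k

namespace ZAux
open NNReal CategoryTheory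

def pt0 : TopSimplex 0 := ⟨fun _ => 1, by show ∑ _i : Fin 1, (1:ℝ≥0) = 1; simp⟩

lemma sum_coords {n : ℕ} (a : TopSimplex n) : ∑ j : Fin (n+1), (a : Fin (n+1) → ℝ≥0) j = 1 := a.2

instance : Subsingleton (TopSimplex 0) := by
  constructor
  intro a b
  apply Subtype.ext
  funext i
  have ha := sum_coords a
  have hb := sum_coords b
  rw [Fin.sum_univ_one] at ha hb
  have hi : i = (0 : Fin 1) := Subsingleton.elim (α := Fin 1) i 0
  show (a : Fin 1 → ℝ≥0) i = (b : Fin 1 → ℝ≥0) i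
  rw [hi, ha, hb]

lemma cm_ext0 {Y : Type} [TopologicalSpace Y] {σ τ : C(TopSimplex 0, Y)} (h : σ pt0 = τ pt0) :
    σ = τ := by
  ext a
  rw [Subsingleton.elim a pt0, h]

lemma faceMap_apply_coord {n : ℕ} (i : Fin (n+2)) (a : TopSimplex n) (k : Fin (n+2)) :
    ((faceMap i a : TopSimplex (n+1)) : Fin (n+2) → ℝ≥0) k
      = ∑ j ∈ Finset.univ.filter (fun j : Fin (n+1) => i.succAbove j = k),
          (a : Fin (n+1) → ℝ≥0) j := by
  classical
  show (SimplexCategory.toTopMap (SimplexCategory.δ i) a : Fin (n+2) → ℝ≥0) k = _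
  show ∑ j ∈ Finset.univ.filter (fun k' => (SimplexCategory.δ i).toOrderHom k' = k), (a : Fin (n+1) → ℝ≥0) j = _
  refine Finset.sum_congr ?_ (fun _ _ => rfl)
  apply Finset.filter_congr
  intro j _
  exact Iff.rfl

lemma faceMap0_apply_coord (i : Fin 2) (a : TopSimplex 0) (k : Fin 2) :
    ((faceMap i a : TopSimplex 1) : Fin 2 → ℝ≥0) k = if i.succAbove 0 = k then 1 else 0 := by
  rw [faceMap_apply_coord]
  have ha : (a : Fin 1 → ℝ≥0) (0 : Fin 1) = 1 := by
    have := sum_coords a; rwa [Fin.sum_univ_one] at this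
  rw [Finset.sum_filter, Fin.sum_univ_one, ha]

lemma faceFace_coord (i : Fin 3) (j : Fin 2) (a : TopSimplex 0) (k : Fin 3) :
    ((faceMap i (faceMap j a) : TopSimplex 2) : Fin 3 → ℝ≥0) k
      = if i.succAbove (j.succAbove 0) = k then 1 else 0 := by
  rw [faceMap_apply_coord]
  rw [Finset.sum_filter, Fin.sum_univ_two]
  rw [faceMap0_apply_coord, faceMap0_apply_coord]
  rcases Fin.exists_fin_two.mp ⟨j.succAbove 0, rfl⟩ with h | h <;>
    · rw [h]
      by_cases h0 : i.succAbove 0 = k <;> by_cases h1 : i.succAbove 1 = k <;>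
        simp_all [Fin.succAbove_right_injective.eq_iff]

lemma faceFace_eq {i₁ i₂ : Fin 3} {j₁ j₂ : Fin 2}
    (h : i₁.succAbove (j₁.succAbove 0) = i₂.succAbove (j₂.succAbove 0)) :
    (faceMap i₁).comp (faceMap j₁) = (faceMap i₂).comp (faceMap j₂) := by
  apply cm_ext0
  show faceMap i₁ (faceMap j₁ pt0) = faceMap i₂ (faceMap j₂ pt0)
  apply Subtype.ext
  funext k
  show ((faceMap i₁ (faceMap j₁ pt0) : TopSimplex 2) : Fin 3 → ℝ≥0) k
    = ((faceMap i₂ (faceMap j₂ pt0) : TopSimplex 2) : Fin 3 → ℝ≥0) k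
  rw [faceFace_coord, faceFace_coord, h]

lemma ff1 : (faceMap (0:Fin 3)).comp (faceMap (0:Fin 2)) = (faceMap 1).comp (faceMap 0) :=
  faceFace_eq (by decide)
lemma ff2 : (faceMap (0:Fin 3)).comp (faceMap (1:Fin 2)) = (faceMap 2).comp (faceMap 0) :=
  faceFace_eq (by decide)
lemma ff3 : (faceMap (1:Fin 3)).comp (faceMap (1:Fin 2)) = (faceMap 2).comp (faceMap 1) :=
  faceFace_eq (by decide)

/-- The canonical path in the 1-simplex from vertex `e₀ = faceMap 1 pt0` to `e₁ = faceMap 0 pt0`. -/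
def seg : Path (faceMap (1:Fin 2) pt0) (faceMap (0:Fin 2) pt0) where
  toFun t := ⟨fun k : Fin 2 => if k = (0 : Fin 2) then Real.toNNReal (1 - (t:ℝ)) else Real.toNNReal (t:ℝ), by
    show ∑ k : Fin 2, _ = 1
    rw [Fin.sum_univ_two]
    simp only [if_pos rfl, if_neg (by decide : (1:Fin 2) ≠ 0)]
    have h0 : (0:ℝ) ≤ (t:ℝ) := t.2.1
    have h1 : (t:ℝ) ≤ 1 := t.2.2
    apply NNReal.coe_injective
    push_cast [Real.coe_toNNReal _ (by linarith : (0:ℝ) ≤ 1 - (t:ℝ)), Real.coe_toNNReal _ h0]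
    ring⟩
  continuous_toFun := by
    apply Continuous.subtype_mk
    have : Continuous fun t : unitInterval => fun k : Fin 2 =>
        if k = (0 : Fin 2) then Real.toNNReal (1 - (t:ℝ)) else Real.toNNReal (t:ℝ) := by
      apply continuous_pi
      intro k
      by_cases hk : k = (0:Fin 2) <;>
        simp only [hk, if_pos, if_neg, if_true, if_false] <;>
        exact continuous_real_toNNReal.comp (by fun_prop)
    exact this
  source' := by
    apply Subtype.ext
    have key : ∀ k : Fin 2,
        (if k = (0:Fin 2) then Real.toNNReal (1 - ((0:unitInterval):ℝ)) else Real.toNNReal ((0:unitInterval):ℝ))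
          = ((faceMap (1:Fin 2) pt0 : TopSimplex 1) : Fin 2 → ℝ≥0) k := by
      intro k
      rw [faceMap0_apply_coord]
      have h2 : (1:Fin 2).succAbove 0 = (0 : Fin 2) := by decide
      rw [h2]
      fin_cases k <;> simp
    funext k
    exact key k
  target' := by
    apply Subtype.ext
    have key : ∀ k : Fin 2,
        (if k = (0:Fin 2) then Real.toNNReal (1 - ((1:unitInterval):ℝ)) else Real.toNNReal ((1:unitInterval):ℝ))
          = ((faceMap (0:Fin 2) pt0 : TopSimplex 1) : Fin 2 → ℝ≥0) k := by
      intro k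
      rw [faceMap0_apply_coord]
      have h2 : (0:Fin 2).succAbove 0 = (1 : Fin 2) := by decide
      rw [h2]
      fin_cases k <;> simp
    funext k
    exact key k

section PC
variable {Y Z : Type} [TopologicalSpace Y] [TopologicalSpace Z]

/-- Path-component class of the image point of a singular `0`-simplex. -/
def pc : C(TopSimplex 0, Y) → ZerothHomotopy Y := fun σ => Quotient.mk (pathSetoid Y) (σ pt0)

lemma pc_eq_of_joined {σ τ : C(TopSimplex 0, Y)} (h : Joined (σ pt0) (τ pt0)) : pc σ = pc τ :=
  Quotient.sound h

lemma joined_of_pc_eq {σ τ : C(TopSimplex 0, Y)} (h : pc σ = pc τ) : Joined (σ pt0) (τ pt0) :=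
  Quotient.exact h

end PC

section Alg
variable {G : Type} [AddCommGroup G] {Y Z : Type} [TopologicalSpace Y] [TopologicalSpace Z]

lemma sBoundary_zero (n : ℕ) : sBoundary (0 : SChain G Y (n+1)) = 0 :=
  Finsupp.sum_zero_index

lemma sBoundary_add {n : ℕ} (a b : SChain G Y (n+1)) :
    sBoundary (a + b) = sBoundary a + sBoundary b := by
  unfold sBoundary
  apply Finsupp.sum_add_index'
  · intro σ
    simp
  · intro σ g₁ g₂
    simp only [Finsupp.single_add, smul_add, Finset.sum_add_distrib]

/-- `sBoundary` as an additive hom. -/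
def bdryHom {n : ℕ} : SChain G Y (n+1) →+ SChain G Y n where
  toFun := sBoundary
  map_zero' := sBoundary_zero n
  map_add' := sBoundary_add

lemma sBoundary_single {n : ℕ} (σ : C(TopSimplex (n+1), Y)) (g : G) :
    sBoundary (Finsupp.single σ g)
      = ∑ i : Fin (n+2), ((-1 : ℤ) ^ (i : ℕ)) • Finsupp.single (σ.comp (faceMap i)) g := by
  unfold sBoundary
  apply Finsupp.sum_single_index
  simp

lemma sBoundary_single1 (σ : C(TopSimplex 1, Y)) (g : G) :
    sBoundary (Finsupp.single σ g)
      = Finsupp.single (σ.comp (faceMap 0)) g - Finsupp.single (σ.comp (faceMap 1)) g := by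
  rw [sBoundary_single, Fin.sum_univ_two]
  norm_num
  exact (sub_eq_add_neg _ _).symm

lemma sBoundary_single2 (σ : C(TopSimplex 2, Y)) (g : G) :
    sBoundary (Finsupp.single σ g)
      = Finsupp.single (σ.comp (faceMap 0)) g - Finsupp.single (σ.comp (faceMap 1)) g
        + Finsupp.single (σ.comp (faceMap 2)) g := by
  rw [sBoundary_single, Fin.sum_univ_three]
  norm_num
  abel

lemma chainMap_zero (φ : C(Y, Z)) (n : ℕ) : chainMap φ (0 : SChain G Y n) = 0 :=
  Finsupp.mapDomain_zero

lemma chainMap_add (φ : C(Y, Z)) {n : ℕ} (a b : SChain G Y n) :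
    chainMap φ (a + b) = chainMap φ a + chainMap φ b :=
  Finsupp.mapDomain_add

lemma chainMap_single (φ : C(Y, Z)) {n : ℕ} (σ : C(TopSimplex n, Y)) (g : G) :
    chainMap φ (Finsupp.single σ g) = Finsupp.single (φ.comp σ) g :=
  Finsupp.mapDomain_single

lemma chainMap_sub (φ : C(Y, Z)) {n : ℕ} (a b : SChain G Y n) :
    chainMap φ (a - b) = chainMap φ a - chainMap φ b := by
  have := (Finsupp.mapDomain.addMonoidHom (M := G) (fun σ : C(TopSimplex n, Y) => φ.comp σ)).map_sub a b
  simpa [Finsupp.mapDomain.addMonoidHom_apply, chainMap] using this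

/-- `∂∂ = 0` in the degree we need. -/
lemma sBoundary_sBoundary (c : SChain G Y 2) : sBoundary (sBoundary c) = 0 := by
  induction c using Finsupp.induction_linear with
  | zero => rw [sBoundary_zero, sBoundary_zero]
  | add a b ha hb => rw [sBoundary_add, sBoundary_add, ha, hb, add_zero]
  | single σ g =>
    rw [sBoundary_single2]
    have hsub : ∀ a b : SChain G Y 1, sBoundary (a - b) = sBoundary a - sBoundary b :=
      fun a b => bdryHom.map_sub a b
    rw [sBoundary_add, hsub, sBoundary_single1, sBoundary_single1, sBoundary_single1]
    rw [ContinuousMap.comp_assoc, ContinuousMap.comp_assoc, ContinuousMap.comp_assoc,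
      ContinuousMap.comp_assoc, ContinuousMap.comp_assoc, ContinuousMap.comp_assoc]
    rw [ff1, ff2, ff3]
    abel

lemma chainMap_sBoundary (φ : C(Y, Z)) (c : SChain G Y 1) :
    sBoundary (chainMap φ c) = chainMap φ (sBoundary c) := by
  induction c using Finsupp.induction_linear with
  | zero => rw [chainMap_zero, sBoundary_zero, sBoundary_zero, chainMap_zero]
  | add a b ha hb => rw [chainMap_add, sBoundary_add, ha, hb, sBoundary_add, chainMap_add]
  | single σ g =>
    rw [chainMap_single, sBoundary_single1, sBoundary_single1, chainMap_sub,
      chainMap_single, chainMap_single, ContinuousMap.comp_assoc, ContinuousMap.comp_assoc]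

/-- The fundamental vanishing: `π₀`-classes kill boundaries. -/
lemma pc_mapDomain_sBoundary (c : SChain G Y 1) :
    Finsupp.mapDomain pc (sBoundary c) = 0 := by
  induction c using Finsupp.induction_linear with
  | zero => rw [sBoundary_zero, Finsupp.mapDomain_zero]
  | add a b ha hb => rw [sBoundary_add, Finsupp.mapDomain_add, ha, hb, add_zero]
  | single σ g =>
    rw [sBoundary_single1]
    have hsub := (Finsupp.mapDomain.addMonoidHom (M := G) (pc (Y := Y))).map_sub
      (Finsupp.single (σ.comp (faceMap 0)) g) (Finsupp.single (σ.comp (faceMap 1)) g)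
    simp only [Finsupp.mapDomain.addMonoidHom_apply] at hsub
    rw [hsub, Finsupp.mapDomain_single, Finsupp.mapDomain_single]
    have hj : pc (σ.comp (faceMap 0)) = pc (σ.comp (faceMap 1)) := by
      apply pc_eq_of_joined
      have h2 : Joined (faceMap (0:Fin 2) pt0) (faceMap (1:Fin 2) pt0) := ⟨seg.symm⟩
      exact ⟨h2.somePath.map σ.continuous⟩
    rw [hj, sub_self]

lemma exists_of_mapDomain_ne_zero {α β : Type} {f : α → β} {d : α →₀ G} {b : β}
    (h : Finsupp.mapDomain f d b ≠ 0) : ∃ a ∈ d.support, f a = b := by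
  by_contra hcon
  push_neg at hcon
  apply h
  rw [Finsupp.mapDomain, Finsupp.sum_apply, Finsupp.sum]
  apply Finset.sum_eq_zero
  intro a ha
  exact Finsupp.single_eq_of_ne (hcon a ha).symm

end Alg

section Theta

/-- Second barycentric coordinate, as a map to the unit interval. -/
def coord1 : C(TopSimplex 1, unitInterval) where
  toFun a := ⟨((a : Fin 2 → ℝ≥0) (1 : Fin 2) : ℝ), by
    constructor
    · exact ((a : Fin 2 → ℝ≥0) (1 : Fin 2)).2
    · have h := sum_coords a
      rw [Fin.sum_univ_two] at h
      have : (a : Fin 2 → ℝ≥0) (1:Fin 2) ≤ 1 := by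
        rw [← h]; exact le_add_self
      exact_mod_cast this⟩
  continuous_toFun := by
    apply Continuous.subtype_mk
    have h1 : Continuous fun a : TopSimplex 1 => ((a : Fin 2 → ℝ≥0) (1 : Fin 2) : ℝ) := by
      apply NNReal.continuous_coe.comp
      exact (continuous_apply _).comp continuous_subtype_val
    exact h1

lemma coord1_face1 : coord1 (faceMap (1:Fin 2) pt0) = 0 := by
  apply Subtype.ext
  show (((faceMap (1:Fin 2) pt0 : TopSimplex 1) : Fin 2 → ℝ≥0) (1:Fin 2) : ℝ) = 0
  rw [faceMap0_apply_coord]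
  norm_num [show (1:Fin 2).succAbove 0 ≠ (1:Fin 2) by decide]

lemma coord1_face0 : coord1 (faceMap (0:Fin 2) pt0) = 1 := by
  apply Subtype.ext
  show (((faceMap (0:Fin 2) pt0 : TopSimplex 1) : Fin 2 → ℝ≥0) (1:Fin 2) : ℝ) = 1
  rw [faceMap0_apply_coord]
  norm_num [show (0:Fin 2).succAbove 0 = (1:Fin 2) by decide]

end Theta

section Lemmas

variable {G : Type} [AddCommGroup G] [Nontrivial G] {X : Type} [TopologicalSpace X]
variable {A U : Set X}

/-- Lemma A: from `H₀(U, U \ A; G) = 0`, every point of `U` is joined in `U`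
to a point of `U \ A`. -/
lemma lemA (h0 : ZeroRelHomology G U (U \ A) Set.diff_subset 0)
    {x : X} (hx : x ∈ U) : ∃ y ∈ U \ A, JoinedIn U x y := by
  obtain ⟨g₀, hg₀⟩ := exists_ne (0 : G)
  set xh : ↥U := ⟨x, hx⟩
  obtain ⟨c', d, hc⟩ := h0 (Finsupp.single (ContinuousMap.const _ xh) g₀)
  have h1 : Finsupp.mapDomain pc (Finsupp.single (ContinuousMap.const _ xh) g₀)
      = Finsupp.mapDomain pc (chainMap (inclCM Set.diff_subset) d) := by
    rw [hc, Finsupp.mapDomain_add, pc_mapDomain_sBoundary, zero_add]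
  rw [Finsupp.mapDomain_single] at h1
  rw [show (chainMap (inclCM Set.diff_subset) d : SChain G ↥U 0)
        = Finsupp.mapDomain (fun σ => (inclCM (Set.diff_subset)).comp σ) d from rfl,
    ← Finsupp.mapDomain_comp] at h1
  have h2 : Finsupp.mapDomain (pc ∘ fun σ => (inclCM (Set.diff_subset (s := U) (t := A))).comp σ) d
      (pc (ContinuousMap.const (TopSimplex 0) xh)) ≠ 0 := by
    rw [← h1, Finsupp.single_eq_same]
    exact hg₀
  obtain ⟨σ, _, hσ⟩ := exists_of_mapDomain_ne_zero h2
  refine ⟨(σ pt0 : X), (σ pt0).2, ?_⟩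
  have hj : Joined ((inclCM (Set.diff_subset (s := U) (t := A))).comp σ pt0) xh :=
    joined_of_pc_eq hσ
  have hxmem : x ∈ U := hx
  have hymem : (σ pt0 : X) ∈ U := ((σ pt0).2 : _ ∈ U \ A).1
  rw [joinedIn_iff_joined hxmem hymem]
  exact hj.symm

/-- Lemma B: from `H₁(U, U \ A; G) = 0`, two points of `U \ A` joined in `U`
are joined in `U \ A`. -/
lemma lemB (h1 : ZeroRelHomology G U (U \ A) Set.diff_subset 1)
    {x y : X} (hx : x ∈ U \ A) (hy : y ∈ U \ A) (hxy : JoinedIn U x y) :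
    JoinedIn (U \ A) x y := by
  obtain ⟨g₀, hg₀⟩ := exists_ne (0 : G)
  set xu : ↥U := ⟨x, hx.1⟩
  set yu : ↥U := ⟨y, hy.1⟩
  set xa : ↥(U \ A) := ⟨x, hx⟩
  set ya : ↥(U \ A) := ⟨y, hy⟩
  have hjoin : Joined xu yu := by rwa [joinedIn_iff_joined hx.1 hy.1] at hxy
  set γ : Path xu yu := hjoin.somePath with hγ
  set σγ : C(TopSimplex 1, ↥U) := γ.toContinuousMap.comp coord1 with hσγ
  have hface0 : σγ.comp (faceMap 0) = ContinuousMap.const _ yu := by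
    apply cm_ext0
    show γ (coord1 (faceMap 0 pt0)) = yu
    rw [coord1_face0]
    exact γ.target
  have hface1 : σγ.comp (faceMap 1) = ContinuousMap.const _ xu := by
    apply cm_ext0
    show γ (coord1 (faceMap 1 pt0)) = xu
    rw [coord1_face1]
    exact γ.source
  set ι : C(↥(U \ A), ↥U) := inclCM Set.diff_subset with hι
  set e : SChain G ↥(U \ A) 0 :=
    Finsupp.single (ContinuousMap.const _ ya) g₀ - Finsupp.single (ContinuousMap.const _ xa) g₀
    with he
  have hbd : sBoundary (Finsupp.single σγ g₀) = chainMap ι e := by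
    rw [sBoundary_single1, hface0, hface1, he, chainMap_sub, chainMap_single, chainMap_single]
    have e1 : ι.comp (ContinuousMap.const _ ya) = ContinuousMap.const _ yu := cm_ext0 rfl
    have e2 : ι.comp (ContinuousMap.const _ xa) = ContinuousMap.const _ xu := cm_ext0 rfl
    rw [e1, e2]
  obtain ⟨c', d, hc⟩ := h1 (Finsupp.single σγ g₀) ⟨e, hbd⟩
  have hstep : sBoundary (Finsupp.single σγ g₀)
      = sBoundary (sBoundary c') + sBoundary (chainMap ι d) := by
    rw [hc, sBoundary_add]
  rw [sBoundary_sBoundary] at hstep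
  replace hstep := hstep.trans (zero_add _)
  rw [chainMap_sBoundary] at hstep
  rw [hbd] at hstep
  have hinj : Function.Injective (fun σ : C(TopSimplex 0, ↥(U \ A)) => ι.comp σ) := by
    intro σ₁ σ₂ hσ
    ext a
    have := congrArg (fun F : C(TopSimplex 0, ↥U) => F a) hσ
    simpa [hι, inclCM, Subtype.ext_iff] using this
  have hed : e = sBoundary d := Finsupp.mapDomain_injective hinj hstep
  have hzero : Finsupp.mapDomain pc e = 0 := by
    rw [hed, pc_mapDomain_sBoundary]
  have hsub := (Finsupp.mapDomain.addMonoidHom (M := G) (pc (Y := ↥(U \ A)))).map_sub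
    (Finsupp.single (ContinuousMap.const (TopSimplex 0) ya) g₀)
    (Finsupp.single (ContinuousMap.const (TopSimplex 0) xa) g₀)
  simp only [Finsupp.mapDomain.addMonoidHom_apply] at hsub
  rw [he, hsub, Finsupp.mapDomain_single, Finsupp.mapDomain_single] at hzero
  have hpc : pc (ContinuousMap.const (TopSimplex 0) ya) = pc (ContinuousMap.const (TopSimplex 0) xa) := by
    by_contra hne
    have := congrArg (fun v => v (pc (ContinuousMap.const (TopSimplex 0) ya))) hzero
    simp only [Finsupp.sub_apply, Finsupp.single_eq_same, Finsupp.coe_zero, Pi.zero_apply] at this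
    rw [Finsupp.single_eq_of_ne hne] at this
    rw [sub_zero] at this
    exact hg₀ this
  have hj : Joined ya xa := joined_of_pc_eq hpc
  rw [joinedIn_iff_joined hx hy]
  exact hj.symm

end Lemmas

section Glue
open unitInterval Set

variable {X : Type} [TopologicalSpace X]

/-- Every point of `I` lies in some `[i/N, (i+1)/N]`, `i < N`. -/
lemma exists_piece (N : ℕ) (hN : 0 < N) (t : I) :
    ∃ i : ℕ, i < N ∧ (i : ℝ) ≤ N * t ∧ (N : ℝ) * t ≤ i + 1 := by
  have ht0 : (0:ℝ) ≤ t := t.2.1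
  have ht1 : (t:ℝ) ≤ 1 := t.2.2
  have hNt0 : (0:ℝ) ≤ N * t := by positivity
  have hNtN : (N:ℝ) * t ≤ N := by
    calc (N:ℝ) * t ≤ N * 1 := by
          apply mul_le_mul_of_nonneg_left ht1 (by positivity)
      _ = N := mul_one _
  set i := min (N - 1) ⌊(N:ℝ) * t⌋₊ with hi
  refine ⟨i, ?_, ?_, ?_⟩
  · have : N - 1 < N := by omega
    exact lt_of_le_of_lt (min_le_left _ _) this
  · calc (i:ℝ) ≤ (⌊(N:ℝ) * t⌋₊ : ℝ) := by
          exact_mod_cast min_le_right (N-1) _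
      _ ≤ N * t := Nat.floor_le hNt0
  · rcases le_or_gt (↑N) ((N:ℝ) * t) with h | h
    · have hNt : (N:ℝ) * t = N := le_antisymm hNtN h
      rw [hNt]
      have : (i:ℝ) + 1 ≥ N := by
        have h1 : ⌊(N:ℝ) * t⌋₊ = N := by rw [hNt]; exact Nat.floor_natCast N
        have : i = N - 1 := by omega
        rw [this]
        have : ((N - 1 : ℕ) : ℝ) = (N:ℝ) - 1 := by
          push_cast [Nat.cast_sub hN]; ring
        rw [this]; linarith
      linarith
    · have hfl : (N:ℝ) * t < ⌊(N:ℝ) * t⌋₊ + 1 := Nat.lt_floor_add_one _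
      have : (i:ℝ) + 1 ≥ ⌊(N:ℝ) * t⌋₊ + 1 ∨ (i:ℝ) + 1 ≥ N := by
        rcases le_or_gt (⌊(N:ℝ) * t⌋₊) (N-1) with h2 | h2
        · left
          have : i = ⌊(N:ℝ) * t⌋₊ := by omega
          rw [this]
        · right
          have : i = N - 1 := by omega
          rw [this]
          have hc : ((N - 1 : ℕ) : ℝ) = (N:ℝ) - 1 := by push_cast [Nat.cast_sub hN]; ring
          rw [hc]; linarith
      rcases this with h3 | h3
      · linarith
      · linarith

/-- Glue `N` paths, the `i`-th one living on `[i/N, (i+1)/N]`. -/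
lemma glue_paths (N : ℕ) (hN : 0 < N) (p : ℕ → C(I, X))
    (hp : ∀ i, i + 1 < N → p i 1 = p (i+1) 0) :
    ∃ g : C(I, X), ∀ i, i < N → ∀ t : I, (i : ℝ) ≤ N * t → (N : ℝ) * t ≤ i + 1 →
      g t = p i (Set.projIcc 0 1 zero_le_one ((N:ℝ) * t - i)) := by
  classical
  set idx : I → ℕ := fun t => min (N - 1) ⌊(N:ℝ) * t⌋₊ with hidx
  set gf : I → X := fun t => p (idx t) (Set.projIcc 0 1 zero_le_one ((N:ℝ) * t - idx t)) with hgf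
  have key : ∀ i, i < N → ∀ t : I, (i : ℝ) ≤ N * t → (N : ℝ) * t ≤ i + 1 →
      gf t = p i (Set.projIcc 0 1 zero_le_one ((N:ℝ) * t - i)) := by
    intro i hiN t h1 h2
    have hNt0 : (0:ℝ) ≤ N * t := le_trans (by positivity) h1
    rcases lt_or_eq_of_le h2 with hlt | heq
    · have hfl : ⌊(N:ℝ) * t⌋₊ = i := by
        rw [Nat.floor_eq_iff hNt0]
        constructor
        · exact_mod_cast h1
        · exact_mod_cast hlt
      have : idx t = i := by
        rw [hidx]; simp only [hfl]; omega
      rw [hgf]; simp only [this]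
    · -- N * t = i + 1
      have hfl : ⌊(N:ℝ) * t⌋₊ = i + 1 := by
        rw [heq, show ((i:ℝ) + 1) = ((i+1 : ℕ) : ℝ) by push_cast; ring, Nat.floor_natCast]
      rcases lt_or_eq_of_le (by omega : i + 1 ≤ N) with hi1 | hi1
      · -- i + 1 < N : idx t = i + 1
        have hidxt : idx t = i + 1 := by rw [hidx]; simp only [hfl]; omega
        rw [hgf]
        simp only [hidxt]
        have e1 : Set.projIcc 0 1 zero_le_one ((N:ℝ) * t - (i+1:ℕ)) = 0 := by
          rw [projIcc_eq_zero]
          push_cast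
          linarith
        have e2 : Set.projIcc 0 1 zero_le_one ((N:ℝ) * t - i) = 1 := by
          rw [projIcc_eq_one]
          linarith
        rw [e1, e2]
        exact (hp i hi1).symm
      · -- i + 1 = N : idx t = N - 1 = i
        have hidxt : idx t = i := by rw [hidx]; simp only [hfl]; omega
        rw [hgf]; simp only [hidxt]
  have hcont : Continuous gf := by
    have hcover : ⋃ i : Fin N, {t : I | (i : ℝ) ≤ N * t ∧ (N:ℝ) * t ≤ i + 1} = Set.univ := by
      apply Set.eq_univ_of_forall
      intro t
      obtain ⟨i, hiN, h1, h2⟩ := exists_piece N hN t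
      exact Set.mem_iUnion.mpr ⟨⟨i, hiN⟩, h1, h2⟩
    apply LocallyFinite.continuous (f := fun i : Fin N => {t : I | (i : ℝ) ≤ N * t ∧ (N:ℝ) * t ≤ i + 1})
    · exact locallyFinite_of_finite _
    · exact hcover
    · intro i
      have : {t : I | (i : ℝ) ≤ N * t ∧ (N:ℝ) * t ≤ i + 1}
          = (fun t : I => (N:ℝ) * t) ⁻¹' (Set.Icc (i:ℝ) (i+1)) := rfl
      rw [this]
      apply IsClosed.preimage
      · fun_prop
      · exact isClosed_Icc
    · intro i
      apply ContinuousOn.congr (f := fun t : I => p i (Set.projIcc 0 1 zero_le_one ((N:ℝ) * t - i)))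
      · apply Continuous.continuousOn
        apply (p i).continuous.comp
        apply continuous_projIcc.comp
        fun_prop
      · intro t ht
        exact key i i.2 t ht.1 ht.2
  exact ⟨⟨gf, hcont⟩, key⟩

end Glue
end ZAux

open unitInterval

/-- The `n`-dimensional cube `[0,1]^n`. -/
abbrev Cube (n : ℕ) : Type := Fin n → I

/-- A family of sets is an open cover of the space. -/
def IsOpenCover {X : Type} [TopologicalSpace X] (𝒰 : Set (Set X)) : Prop :=
  (∀ U ∈ 𝒰, IsOpen U) ∧ ⋃₀ 𝒰 = Set.univ

/-- Two maps are `𝒰`-homotopic: they are connected by a homotopy each of whose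
tracks lies in a single member of `𝒰`. -/
def UHomotopic {K X : Type} [TopologicalSpace K] [TopologicalSpace X]
    (𝒰 : Set (Set X)) (f g : C(K, X)) : Prop :=
  ∃ H : ContinuousMap.Homotopy f g, ∀ z : K, ∃ U ∈ 𝒰, ∀ t : I, H (t, z) ∈ U

/-- Two maps are `𝒰`-near. -/
def UNear {K X : Type} [TopologicalSpace K] [TopologicalSpace X]
    (𝒰 : Set (Set X)) (f g : C(K, X)) : Prop :=
  ∀ z : K, ∃ U ∈ 𝒰, f z ∈ U ∧ g z ∈ U

/-- `A` is a homotopical `Z_n`-set in `X`. -/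
def IsHomotopicalZSet {X : Type} [TopologicalSpace X] (A : Set X) (n : ℕ) : Prop :=
  IsClosed A ∧ ∀ 𝒰 : Set (Set X), IsOpenCover 𝒰 → ∀ f : C(Cube n, X),
    ∃ g : C(Cube n, X), (∀ z, g z ∉ A) ∧ UHomotopic 𝒰 f g

/-- `A` is a `Z_n`-set in `X`. -/
def IsZSet {X : Type} [TopologicalSpace X] (A : Set X) (n : ℕ) : Prop :=
  IsClosed A ∧ ∀ 𝒰 : Set (Set X), IsOpenCover 𝒰 → ∀ f : C(Cube n, X),
    ∃ g : C(Cube n, X), (∀ z, g z ∉ A) ∧ UNear 𝒰 f g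

/-- The `HDD^{m}_{n,k}`-property. -/
def HDD (X : Type) [TopologicalSpace X] (m n k : ℕ) : Prop :=
  ∀ 𝒰 : Set (Set X), IsOpenCover 𝒰 →
    ∀ (f : C(Cube m × Cube n, X)) (g : C(Cube m × Cube k, X)),
      ∃ (f' : C(Cube m × Cube n, X)) (g' : C(Cube m × Cube k, X)),
        UHomotopic 𝒰 f f' ∧ UHomotopic 𝒰 g g' ∧
        ∀ (z : Cube m) (s : Cube n) (t : Cube k), f' (z, s) ≠ g' (z, t)

namespace ZAux
open unitInterval

/-- The main lemma: a `G`-homological `Z₁`-set is a `Z₁`-set. -/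
lemma main_lemma {X : Type} [TopologicalSpace X] (A : Set X) (G : Type) [AddCommGroup G]
    [Nontrivial G] (hA : IsGHomologicalZSet G A 1) : IsZSet A 1 := by
  obtain ⟨hclosed, hz⟩ := hA
  refine ⟨hclosed, ?_⟩
  intro 𝒰 h𝒰 f
  -- identify `Cube 1` with `I`
  set e : Cube 1 ≃ₜ I := Homeomorph.funUnique (Fin 1) I with he
  set f' : C(I, X) := f.comp ⟨e.symm, e.symm.continuous⟩ with hf'
  -- Lebesgue number
  have hopen : ∀ W : Set X, W ∈ 𝒰 → IsOpen W := h𝒰.1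
  have hcovI : ∀ t : I, ∃ W ∈ 𝒰, f' t ∈ W := by
    intro t
    have : f' t ∈ ⋃₀ 𝒰 := by rw [h𝒰.2]; trivial
    obtain ⟨W, hW, hmem⟩ := this
    exact ⟨W, hW, hmem⟩
  obtain ⟨δ, hδ, hball⟩ := lebesgue_number_lemma_of_metric (ι := 𝒰)
    (c := fun W => f' ⁻¹' W.1) isCompact_univ
    (fun W => (f'.continuous.isOpen_preimage _ (hopen W.1 W.2)))
    (by intro t _; obtain ⟨W, hW, hmem⟩ := hcovI t; exact Set.mem_iUnion.mpr ⟨⟨W, hW⟩, hmem⟩)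
  obtain ⟨N, hNδ⟩ := exists_nat_gt (1 / δ)
  have hN : 0 < N := by
    by_contra h
    push_neg at h
    interval_cases N
    simp at hNδ
    have : 0 < 1 / δ := by positivity
    linarith
  have hNpos : (0:ℝ) < N := by exact_mod_cast hN
  have hNinv : 1 / (N:ℝ) < δ := by
    rw [div_lt_iff₀ hNpos]
    rw [div_lt_iff₀ hδ] at hNδ
    linarith [hNδ]
  -- choose a member of the cover for each piece `[i/N, (i+1)/N]`
  have hWex : ∀ i : Fin N, ∃ W ∈ 𝒰, ∀ t : I, ((i:ℕ):ℝ) ≤ N * t → (N:ℝ) * t ≤ (i:ℕ) + 1 → f' t ∈ W := by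
    intro i
    have hi1 : ((i:ℕ):ℝ) / N ∈ Set.Icc (0:ℝ) 1 := by
      constructor
      · positivity
      · rw [div_le_one hNpos]
        have : (i:ℕ) < N := i.2
        exact_mod_cast this.le
    set m : I := ⟨((i:ℕ):ℝ) / N, hi1⟩ with hm
    obtain ⟨⟨W, hW𝒰⟩, hsub⟩ := hball m trivial
    refine ⟨W, hW𝒰, ?_⟩
    intro t h1 h2
    apply hsub
    rw [Metric.mem_ball, Subtype.dist_eq]
    have hd : |(t:ℝ) - ((i:ℕ):ℝ)/N| ≤ 1 / N := by
      rw [abs_le]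
      constructor
      · have : ((i:ℕ):ℝ)/N ≤ t := by rw [div_le_iff₀ hNpos]; linarith [h1]
        have h0N : (0:ℝ) ≤ 1/N := by positivity
        linarith
      · have ha : (t:ℝ) ≤ (((i:ℕ):ℝ) + 1)/N := by rw [le_div_iff₀ hNpos]; linarith [h2]
        have hb : ((i:ℕ):ℝ)/N + 1/N = (((i:ℕ):ℝ) + 1)/N := by ring
        linarith
    calc dist (t:ℝ) (((i:ℕ):ℝ)/N) = |(t:ℝ) - ((i:ℕ):ℝ)/N| := Real.dist_eq _ _
      _ ≤ 1/N := hd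
      _ < δ := hNinv
  choose Wf hWf1 hWf2 using hWex
  set W : ℕ → Set X := fun i => if h : i < N then Wf ⟨i, h⟩ else Wf ⟨N-1, by omega⟩ with hWdef
  have hWmem : ∀ i, W i ∈ 𝒰 := by
    intro i
    rw [hWdef]
    by_cases h : i < N <;> simp only [h, dif_pos, dif_neg, not_false_iff] <;> apply hWf1
  have hWprop : ∀ i, i < N → ∀ t : I, (i:ℝ) ≤ N * t → (N:ℝ) * t ≤ i + 1 → f' t ∈ W i := by
    intro i h t h1 h2
    rw [hWdef]
    simp only [h, dif_pos]
    exact hWf2 ⟨i, h⟩ t h1 h2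
  have hWN : W N = W (N-1) := by
    rw [hWdef]
    simp only [lt_irrefl, dif_neg, not_false_iff]
    have h1 : N - 1 < N := by omega
    simp only [h1, dif_pos]
  -- the subdivision vertices
  set vert : ℕ → I := fun i => Set.projIcc 0 1 zero_le_one ((i:ℝ)/N) with hvert
  have hvertc : ∀ i, i ≤ N → ((vert i : I) : ℝ) = (i:ℝ)/N := by
    intro i hi
    rw [hvert]
    simp only [Set.coe_projIcc]
    rw [max_eq_right (by positivity), min_eq_right]
    rw [div_le_one hNpos]
    exact_mod_cast hi
  -- the intersection neighbourhoods of the vertices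
  set V : ℕ → Set X := fun i => if i = 0 then W 0 else W (i-1) ∩ W i with hVdef
  have hVopen : ∀ i, IsOpen (V i) := by
    intro i
    rw [hVdef]
    by_cases h : i = 0 <;> simp only [h, if_pos, if_neg, not_false_iff]
    · exact hopen _ (hWmem 0)
    · exact (hopen _ (hWmem (i-1))).inter (hopen _ (hWmem i))
  have hVW : ∀ i, V i ⊆ W i := by
    intro i
    rw [hVdef]
    by_cases h : i = 0 <;> simp only [h, if_pos, if_neg, not_false_iff]
    · exact fun _ h => h
    · exact Set.inter_subset_right
  have hVWpred : ∀ i, V (i+1) ⊆ W i := by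
    intro i
    rw [hVdef]
    simp only [Nat.succ_ne_zero, if_neg, not_false_iff, Nat.add_sub_cancel]
    exact Set.inter_subset_left
  have hVN : V N ⊆ W (N-1) := by
    intro x hx
    rw [hVdef] at hx
    rcases Nat.eq_zero_or_pos N with h | h
    · omega
    · have hN0 : N ≠ 0 := by omega
      simp only [hN0, if_neg, not_false_iff] at hx
      exact hx.1
  have hfvert : ∀ i, i ≤ N → f' (vert i) ∈ V i := by
    intro i hi
    have hNv : (N:ℝ) * (vert i) = i := by
      rw [hvertc i hi]
      field_simp
    rw [hVdef]
    by_cases h : i = 0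
    · subst h
      simp only [if_pos rfl]
      apply hWprop 0 hN <;> · rw [hNv]; try norm_num
    · simp only [h, if_neg, not_false_iff]
      constructor
      · apply hWprop (i-1) (by omega)
        · rw [hNv]
          have : ((i-1:ℕ):ℝ) = (i:ℝ) - 1 := by
            have h1 : 1 ≤ i := by omega
            push_cast [Nat.cast_sub h1]
            ring
          rw [this]; linarith
        · rw [hNv]
          have : ((i-1:ℕ):ℝ) = (i:ℝ) - 1 := by
            have h1 : 1 ≤ i := by omega
            push_cast [Nat.cast_sub h1]
            ring
          rw [this]; linarith
      · rcases lt_or_eq_of_le hi with h2 | h2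
        · apply hWprop i h2
          · rw [hNv]
          · rw [hNv]; linarith
        · rw [h2, hWN]
          have hNvN : (N:ℝ) * (vert N) = N := by
            rw [hvertc N le_rfl]
            field_simp
          have hc : ((N-1:ℕ):ℝ) = (N:ℝ) - 1 := by
            push_cast [Nat.cast_sub hN]
            ring
          apply hWprop (N-1) (by omega)
          · rw [hNvN, hc]; linarith
          · rw [hNvN, hc]; linarith
  -- push the vertices off `A` using Lemma A
  have hyex : ∀ i : ℕ, ∃ yy : X, i ≤ N → (yy ∈ V i \ A ∧ JoinedIn (V i) (f' (vert i)) yy) := by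
    intro i
    by_cases hi : i ≤ N
    · obtain ⟨yy, hyy1, hyy2⟩ := lemA (G := G) (hz (V i) (hVopen i) 0 (by norm_num)) (hfvert i hi)
      exact ⟨yy, fun _ => ⟨hyy1, hyy2⟩⟩
    · exact ⟨f' 0, fun h => absurd h hi⟩
  choose y hy using hyex
  -- join consecutive `y i` inside `W i \ A` using Lemma B
  have hjoins : ∀ i, i < N → JoinedIn (W i \ A) (y i) (y (i+1)) := by
    intro i hiN
    obtain ⟨hyi, hji⟩ := hy i (by omega)
    obtain ⟨hyi1, hji1⟩ := hy (i+1) (by omega)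
    have hyiW : y i ∈ W i \ A := ⟨hVW i hyi.1, hyi.2⟩
    have hyi1W : y (i+1) ∈ W i \ A := ⟨hVWpred i hyi1.1, hyi1.2⟩
    have hseg : JoinedIn (W i) (f' (vert i)) (f' (vert (i+1))) := by
      -- the path `s ↦ f' (projIcc ((i+s)/N))`
      have hcont : Continuous fun s : I => f' (Set.projIcc 0 1 zero_le_one (((i:ℝ) + s)/N)) := by
        apply f'.continuous.comp
        apply continuous_projIcc.comp
        fun_prop
      have hproj : ∀ s : I, ((Set.projIcc 0 1 zero_le_one (((i:ℝ) + s)/N) : I) : ℝ)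
          = ((i:ℝ) + s)/N := by
        intro s
        have hs0 : (0:ℝ) ≤ s := s.2.1
        have hs1 : (s:ℝ) ≤ 1 := s.2.2
        simp only [Set.coe_projIcc]
        rw [max_eq_right (by positivity), min_eq_right]
        rw [div_le_one hNpos]
        have : (i:ℝ) + 1 ≤ N := by exact_mod_cast hiN
        linarith
      refine ⟨⟨⟨fun s => f' (Set.projIcc 0 1 zero_le_one (((i:ℝ) + s)/N)), hcont⟩, ?_, ?_⟩, ?_⟩
      · show f' (Set.projIcc 0 1 zero_le_one (((i:ℝ) + ((0:I):ℝ))/N)) = f' (vert i)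
        congr 1
        apply Subtype.ext
        rw [hproj, hvertc i (by omega)]
        norm_num
      · show f' (Set.projIcc 0 1 zero_le_one (((i:ℝ) + ((1:I):ℝ))/N)) = f' (vert (i+1))
        congr 1
        apply Subtype.ext
        rw [hproj, hvertc (i+1) (by omega)]
        push_cast
        norm_num
      · intro s
        show f' (Set.projIcc 0 1 zero_le_one (((i:ℝ) + s)/N)) ∈ W i
        apply hWprop i hiN
        · rw [hproj]
          have hs0 : (0:ℝ) ≤ s := s.2.1
          rw [mul_div_cancel₀ _ (ne_of_gt hNpos)]
          linarith
        · rw [hproj]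
          have hs1 : (s:ℝ) ≤ 1 := s.2.2
          rw [mul_div_cancel₀ _ (ne_of_gt hNpos)]
          linarith
    have hbig : JoinedIn (W i) (y i) (y (i+1)) :=
      ((hji.symm.mono (hVW i)).trans hseg).trans (hji1.mono (hVWpred i))
    exact lemB (G := G) (hz (W i) (hopen _ (hWmem i)) 1 le_rfl) hyiW hyi1W hbig
  -- choose the connecting paths
  have hpex : ∀ i : ℕ, ∃ pp : C(I, X), i < N →
      (pp 0 = y i ∧ pp 1 = y (i+1) ∧ ∀ s : I, pp s ∈ W i \ A) := by
    intro i
    by_cases hi : i < N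
    · obtain ⟨γ, hγ⟩ := hjoins i hi
      exact ⟨γ.toContinuousMap, fun _ => ⟨γ.source, γ.target, hγ⟩⟩
    · exact ⟨ContinuousMap.const _ (y 0), fun h => absurd h hi⟩
  choose p hpp using hpex
  have hglue : ∀ i, i + 1 < N → p i 1 = p (i+1) 0 := by
    intro i hi
    rw [(hpp i (by omega)).2.1, ((hpp (i+1) hi).1)]
  obtain ⟨g', hg'⟩ := glue_paths N hN p hglue
  refine ⟨g'.comp ⟨e, e.continuous⟩, ?_, ?_⟩
  · intro z
    obtain ⟨i, hiN, h1, h2⟩ := exists_piece N hN (e z)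
    have : g'.comp ⟨e, e.continuous⟩ z = p i (Set.projIcc 0 1 zero_le_one ((N:ℝ) * (e z) - i)) := by
      show g' (e z) = _
      exact hg' i hiN (e z) h1 h2
    rw [this]
    exact ((hpp i hiN).2.2 _).2
  · intro z
    obtain ⟨i, hiN, h1, h2⟩ := exists_piece N hN (e z)
    refine ⟨W i, hWmem i, ?_, ?_⟩
    · have : f z = f' (e z) := by
        show f z = f (e.symm (e z))
        rw [Homeomorph.symm_apply_apply]
      rw [this]
      exact hWprop i hiN (e z) h1 h2
    · have : g'.comp ⟨e, e.continuous⟩ z = p i (Set.projIcc 0 1 zero_le_one ((N:ℝ) * (e z) - i)) := by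
        show g' (e z) = _
        exact hg' i hiN (e z) h1 h2
      rw [this]
      exact ((hpp i hiN).2.2 _).1

end ZAux

/-- Every `ℤ`-homological `Z_1`-set is a `Z_1`-set; more generally every
`G`-homological `Z_1`-set for a nontrivial abelian group `G` is a `Z_1`-set. -/
theorem isZSet_one_of_homologicalZSet {X : Type} [TopologicalSpace X] (A : Set X) :
    (IsGHomologicalZSet ℤ A 1 → IsZSet A 1) ∧
    (∀ (G : Type) (_ : AddCommGroup G), Nontrivial G →
      IsGHomologicalZSet G A 1 → IsZSet A 1) := by
  constructor
  · intro h
    exact ZAux.main_lemma A ℤ h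
  · intro G instG hG h
    exact @ZAux.main_lemma X _ A G instG hG h
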